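/- Let s ≥ 2 and n ≥ 2s+2 be integers, and let F ⊆ C([n],3) be a shifted family with property U(s, 2s+1) such that {2,3,4} ∈ F. Then {1, s+3, 2s+2} ∉ F. -/
import Mathlib


open Finset
open scoped Classical

/-- `F` has property `U(s,q)`: any `s` (not necessarily distinct) members have union of size `≤ q`. -/
def propU (F : Finset (Finset ℕ)) (s q : ℕ) : Prop :=
  ∀ G : Fin s → Finset ℕ, (∀ i, G i ∈ F) → (Finset.univ.sup G).card ≤ q

/-- `A(p,r,n,k)`: the `k`-subsets of `[n] = {1,…,n}` meeting `[p]` in at least `r` elements. -/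
def famA (p r n k : ℕ) : Finset (Finset ℕ) :=
  (Finset.powersetCard k (Finset.Icc 1 n)).filter fun A => r ≤ (A ∩ Finset.Icc 1 p).card

/-- `G ≼ F`: comparing the increasing enumerations elementwise. -/
def shiftLE (G F : Finset ℕ) : Prop :=
  List.Forall₂ (· ≤ ·) (G.sort (· ≤ ·)) (F.sort (· ≤ ·))

/-- `F ⊆ C([n],k)` is shifted. -/
def IsShifted (n k : ℕ) (F : Finset (Finset ℕ)) : Prop :=
  ∀ A ∈ F, ∀ G ∈ Finset.powersetCard k (Finset.Icc 1 n), shiftLE G A → G ∈ F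

/-- `m(n,k,s,q)`: the maximum size of a family `F ⊆ C([n],k)` with property `U(s,q)`. -/
noncomputable def mMax (n k s q : ℕ) : ℕ :=
  ((Finset.powersetCard k (Finset.Icc 1 n)).powerset.filter fun F => propU F s q).sup
    Finset.card

lemma sort_triple {a b c : ℕ} (h1 : a < b) (h2 : b < c) :
    ({a, b, c} : Finset ℕ).sort (· ≤ ·) = [a, b, c] := by
  rw [Finset.sort_insert, Finset.sort_insert, Finset.sort_singleton]
  · intro x hx; simp at hx; omega
  · simp; omega
  · intro x hx; simp at hx; rcases hx with h | h <;> omega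
  · simp; omega

lemma card_triple {a b c : ℕ} (h1 : a < b) (h2 : b < c) :
    ({a, b, c} : Finset ℕ).card = 3 := by
  rw [Finset.card_insert_of_notMem (by simp; omega),
      Finset.card_insert_of_notMem (by simp; omega), Finset.card_singleton]

/-- Claim 2.7 of the paper. -/
theorem stmt10 (n s : ℕ) (hs : 2 ≤ s) (hn : 2 * s + 2 ≤ n)
    (F : Finset (Finset ℕ)) (hF : F ⊆ Finset.powersetCard 3 (Finset.Icc 1 n))
    (hshift : IsShifted n 3 F) (hU : propU F s (2 * s + 1))
    (hmem : ({2, 3, 4} : Finset ℕ) ∈ F) :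
    ({1, s + 3, 2 * s + 2} : Finset ℕ) ∉ F := by
  intro hmem2
  set G : Fin s → Finset ℕ := fun j =>
    if j.val = 0 then ({2, 3, 4} : Finset ℕ)
    else ({1, j.val + 4, s + j.val + 3} : Finset ℕ) with hG
  have hGF : ∀ j, G j ∈ F := by
    intro j
    by_cases h0 : j.val = 0
    · simp [hG, h0, hmem]
    · have hj : 1 ≤ j.val ∧ j.val ≤ s - 1 := ⟨by omega, by have := j.isLt; omega⟩
      simp only [hG]
      rw [if_neg h0]
      apply hshift _ hmem2
      · rw [Finset.mem_powersetCard]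
        constructor
        · intro x hx
          simp only [Finset.mem_insert, Finset.mem_singleton] at hx
          rw [Finset.mem_Icc]
          omega
        · exact card_triple (by omega) (by omega)
      · unfold shiftLE
        rw [sort_triple (by omega) (by omega), sort_triple (by omega) (by omega)]
        refine List.Forall₂.cons le_rfl (List.Forall₂.cons ?_ (List.Forall₂.cons ?_ List.Forall₂.nil)) <;> omega
  have hsub : Finset.Icc 1 (2 * s + 2) ⊆ Finset.univ.sup G := by
    intro x hx
    rw [Finset.mem_Icc] at hx
    rw [Finset.mem_sup]
    by_cases h234 : x = 2 ∨ x = 3 ∨ x = 4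
    · refine ⟨⟨0, by omega⟩, Finset.mem_univ _, ?_⟩
      simp [hG]; omega
    · by_cases h1 : x = 1
      · refine ⟨⟨1, by omega⟩, Finset.mem_univ _, ?_⟩
        simp [hG, h1]
      · by_cases hlo : x ≤ s + 3
        · refine ⟨⟨x - 4, by omega⟩, Finset.mem_univ _, ?_⟩
          simp only [hG]
          rw [if_neg (by omega)]
          simp; omega
        · refine ⟨⟨x - s - 3, by omega⟩, Finset.mem_univ _, ?_⟩
          simp only [hG]
          rw [if_neg (by omega)]
          simp; omega
  have hcard : 2 * s + 2 ≤ (Finset.univ.sup G).card := by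
    calc 2 * s + 2 = (Finset.Icc 1 (2 * s + 2)).card := by rw [Nat.card_Icc]; omega
    _ ≤ _ := Finset.card_le_card hsub
  have := hU G hGF
  omega
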